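/- The quadratic form d²Φ_β(X)[H] = (det X)^β ( trace((X^{-1}H)²) − β·trace²(X^{-1}H) ) is positive definite on the space of symmetric matrices H, for every symmetric positive-definite X and every real β < 1/n. -/

import Mathlib

open Matrix

lemma key_trace_ineq {n : ℕ} (A : Matrix (Fin n) (Fin n) ℝ) (hA : A.IsSymm)
    (hA0 : A ≠ 0) (β : ℝ) (hβ : β < 1 / n) :
    0 < (A * A).trace - β * A.trace ^ 2 := by
  have hn : 0 < n := by
    rcases Nat.eq_zero_or_pos n with h | h
    · exfalso; subst h; exact hA0 (Subsingleton.elim _ _)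
    · exact h
  -- trace (A*A) = sum of squares of entries
  have hsymm : ∀ i j, A j i = A i j := fun i j => hA.apply i j
  have hT2 : (A * A).trace = ∑ i, ∑ j, (A i j) ^ 2 := by
    simp only [Matrix.trace, Matrix.diag, Matrix.mul_apply]
    refine Finset.sum_congr rfl fun i _ => Finset.sum_congr rfl fun j _ => ?_
    rw [hsymm i j, sq]
  obtain ⟨i₀, j₀, hij⟩ : ∃ i j, A i j ≠ 0 := by
    by_contra h
    push_neg at h
    exact hA0 (by ext i j; exact h i j)
  have hT2pos : 0 < ∑ i, ∑ j, (A i j) ^ 2 := by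
    have h1 : (A i₀ j₀) ^ 2 ≤ ∑ j, (A i₀ j) ^ 2 :=
      Finset.single_le_sum (f := fun j => (A i₀ j) ^ 2) (fun j _ => sq_nonneg _)
        (Finset.mem_univ j₀)
    have h2 : ∑ j, (A i₀ j) ^ 2 ≤ ∑ i, ∑ j, (A i j) ^ 2 :=
      Finset.single_le_sum (f := fun i => ∑ j, (A i j) ^ 2)
        (fun i _ => Finset.sum_nonneg fun j _ => sq_nonneg _) (Finset.mem_univ i₀)
    have h3 := pow_pos (abs_pos.mpr hij) 2
    rw [sq_abs] at h3
    linarith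
  have hdiag : ∑ i, (A i i) ^ 2 ≤ ∑ i, ∑ j, (A i j) ^ 2 := by
    refine Finset.sum_le_sum fun i _ => ?_
    exact Finset.single_le_sum (f := fun j => (A i j) ^ 2) (fun j _ => sq_nonneg _)
      (Finset.mem_univ i)
  have hcs : A.trace ^ 2 ≤ n * ∑ i, (A i i) ^ 2 := by
    have := sq_sum_le_card_mul_sum_sq (s := (Finset.univ : Finset (Fin n)))
      (f := fun i => A i i)
    simpa [Matrix.trace, Matrix.diag] using this
  rw [hT2]
  rcases le_or_gt β 0 with hb | hb
  · nlinarith [sq_nonneg A.trace]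
  · have hn' : (0 : ℝ) < n := by exact_mod_cast hn
    have hβn : β * n < 1 := by
      have := (lt_div_iff₀ hn').mp hβ
      linarith
    have hchain : β * A.trace ^ 2 < ∑ i, ∑ j, (A i j) ^ 2 := by
      calc β * A.trace ^ 2 ≤ β * (n * ∑ i, (A i i) ^ 2) :=
            mul_le_mul_of_nonneg_left hcs hb.le
        _ = (β * n) * ∑ i, (A i i) ^ 2 := by ring
        _ ≤ (β * n) * ∑ i, ∑ j, (A i j) ^ 2 :=
            mul_le_mul_of_nonneg_left hdiag (mul_nonneg hb.le (Nat.cast_nonneg n))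
        _ < 1 * ∑ i, ∑ j, (A i j) ^ 2 := mul_lt_mul_of_pos_right hβn hT2pos
        _ = ∑ i, ∑ j, (A i j) ^ 2 := one_mul _
    linarith

theorem hessian_power_potential_posDef {n : ℕ} (X : Matrix (Fin n) (Fin n) ℝ)
    (hX : X.PosDef) (β : ℝ) (hβ : β < 1 / n)
    (H : Matrix (Fin n) (Fin n) ℝ) (hH : H.IsSymm) (hH0 : H ≠ 0) :
    0 < X.det ^ β *
      ((X⁻¹ * H * X⁻¹ * H).trace - β * (X⁻¹ * H).trace ^ 2) := by
  have hXi : (X⁻¹).PosDef := hX.inv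
  open scoped MatrixOrder in
  set S := CFC.sqrt (X⁻¹) with hSdef
  open scoped MatrixOrder in
  have hSS : S * S = X⁻¹ := CFC.sqrt_mul_sqrt_self (X⁻¹) hXi.posSemidef.nonneg
  have hSsymm : Sᵀ = S := by
    have : S.IsHermitian := by
      open scoped MatrixOrder in
      exact (CFC.sqrt_nonneg (X⁻¹)).posSemidef.isHermitian
    rw [← Matrix.conjTranspose_eq_transpose_of_trivial]; exact this
  have hSdet : IsUnit S.det := by
    refine isUnit_iff_ne_zero.mpr fun h => ?_
    have : (X⁻¹).det = 0 := by rw [← hSS, Matrix.det_mul, h, mul_zero]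
    exact hXi.det_pos.ne' this
  set A := S * H * S with hAdef
  have hAsymm : A.IsSymm := by
    unfold Matrix.IsSymm
    rw [hAdef, Matrix.transpose_mul, Matrix.transpose_mul, hSsymm, hH, mul_assoc]
  have hA0 : A ≠ 0 := by
    intro h
    apply hH0
    have h1 : S⁻¹ * (S * H * S) * S⁻¹ = S⁻¹ * 0 * S⁻¹ := by rw [← hAdef, h]
    have h2 : S⁻¹ * (S * H * S) * S⁻¹ = H := by
      rw [← mul_assoc, ← mul_assoc, Matrix.nonsing_inv_mul S hSdet, one_mul,
        mul_assoc, Matrix.mul_nonsing_inv S hSdet, mul_one]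
    rw [h2] at h1
    simpa using h1
  have htr1 : (X⁻¹ * H * X⁻¹ * H).trace = (A * A).trace := by
    have e1 : X⁻¹ * H * X⁻¹ * H = S * (S * H * S * (S * H)) := by
      rw [← hSS]; noncomm_ring
    have e2 : S * H * S * (S * H) * S = A * A := by rw [hAdef]; noncomm_ring
    rw [e1, Matrix.trace_mul_comm, e2]
  have htr2 : (X⁻¹ * H).trace = A.trace := by
    have e1 : X⁻¹ * H = S * (S * H) := by rw [← hSS]; noncomm_ring
    have e2 : S * H * S = A := rfl
    rw [e1, Matrix.trace_mul_comm, e2]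
  rw [htr1, htr2]
  have hmain := key_trace_ineq A hAsymm hA0 β hβ
  have hdet : 0 < X.det ^ β := Real.rpow_pos_of_pos hX.det_pos β
  exact mul_pos hdet hmain
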